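/- Let (μ_t)_{t≥0} be a monotone convolution semigroup with reciprocal Cauchy transforms (H_t)_{t≥0} (so H_{s+t} = H_s ∘ H_t and H_0 = id on ℂ⁺), and define transition operators T_t f(x) = ∫_ℝ f dμ_{t,x} where μ_{t,x} = δ_x ▷ μ_t has reciprocal Cauchy transform H_t(z) − x. Then (T_t)_{t≥0} is a semigroup on C_b(ℝ): T_s(T_t f) = T_{s+t} f for all s, t ≥ 0 and f ∈ C_b(ℝ). -/

import Mathlib

open MeasureTheory

open Real Filter Topology ProbabilityTheory

noncomputable def cker (e x u : ℝ) : ℝ := e / ((x - u)^2 + e^2)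

lemma cker_nonneg {e : ℝ} (he : 0 < e) (x u : ℝ) : 0 ≤ cker e x u := by
  unfold cker; positivity

lemma cker_le {e : ℝ} (he : 0 < e) (x u : ℝ) : cker e x u ≤ e⁻¹ := by
  unfold cker
  rw [div_le_iff₀ (by positivity)]
  rw [inv_mul_eq_div, le_div_iff₀ he]
  nlinarith [sq_nonneg (x - u)]

lemma cker_cont {e : ℝ} (he : 0 < e) : Continuous fun p : ℝ × ℝ => cker e p.1 p.2 := by
  unfold cker
  exact continuous_const.div (by fun_prop) (fun p => by positivity)

lemma cker_integrable {e : ℝ} (he : 0 < e) (u : ℝ) :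
    Integrable (fun x => cker e x u) := by
  have h1 : Integrable fun x : ℝ => (1 + (x * e⁻¹)^2)⁻¹ :=
    integrable_inv_one_add_sq.comp_mul_right' (inv_ne_zero he.ne')
  have h2 : Integrable fun x : ℝ => (1 + ((x - u) * e⁻¹)^2)⁻¹ := h1.comp_sub_right u
  have h3 := h2.const_mul e⁻¹
  refine h3.congr (Eventually.of_forall fun x => ?_)
  unfold cker
  rw [eq_div_iff (by positivity)]
  field_simp
  ring

lemma cker_subst {e : ℝ} (he : 0 < e) (g : ℝ → ℝ) (u : ℝ) :
    ∫ x, g x * cker e x u = ∫ v, g (u + e * v) * (1 + v^2)⁻¹ := by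
  have key : ∀ v : ℝ, g (u + e * v) * (1 + v^2)⁻¹
      = e * ((fun w => g w * cker e w u) (e * v + u)) := by
    intro v
    simp only [cker]
    rw [show e * v + u - u = e * v by ring]
    rw [show (e*v)^2 + e^2 = e^2 * (1 + v^2) by ring]
    rw [show u + e * v = e * v + u by ring]
    field_simp
  simp_rw [key]
  rw [MeasureTheory.integral_const_mul]
  rw [show (fun v : ℝ => (fun w => g w * cker e w u) (e * v + u))
      = fun v : ℝ => (fun w => g (w + u) * cker e (w + u) u) (e * v) from rfl]
  rw [Measure.integral_comp_mul_left (fun w => g (w + u) * cker e (w + u) u) e]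
  rw [integral_add_right_eq_self (fun w => g w * cker e w u) u]
  rw [abs_of_pos (inv_pos.mpr he), smul_eq_mul]
  rw [← mul_assoc, mul_inv_cancel₀ he.ne', one_mul]

lemma cker_integral {e : ℝ} (he : 0 < e) (u : ℝ) : ∫ x, cker e x u = π := by
  have := cker_subst he (fun _ => 1) u
  simpa using this.trans (by simpa using integral_univ_inv_one_add_sq)

lemma resolvent_ne {z : ℂ} (hz : 0 < z.im) (u : ℝ) : z - (u : ℂ) ≠ 0 := by
  intro h
  have : (z - (u : ℂ)).im = 0 := by rw [h]; simp
  simp [Complex.sub_im] at this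
  linarith

lemma integrable_resolvent (m : Measure ℝ) [IsProbabilityMeasure m] {z : ℂ}
    (hz : 0 < z.im) : Integrable (fun u : ℝ => (z - (u : ℂ))⁻¹) m := by
  have hcont : Continuous fun u : ℝ => (z - (u : ℂ))⁻¹ :=
    (continuous_const.sub Complex.continuous_ofReal).inv₀ (fun u => resolvent_ne hz u)
  refine ⟨hcont.aestronglyMeasurable, ?_⟩
  apply HasFiniteIntegral.of_bounded (C := (z.im)⁻¹)
  filter_upwards with u
  rw [norm_inv]
  refine inv_anti₀ hz ?_
  calc z.im = |(z - (u:ℂ)).im| := by simp [Complex.sub_im, abs_of_pos hz]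
    _ ≤ ‖z - (u:ℂ)‖ := Complex.abs_im_le_norm _

lemma neg_inv_im (w : ℂ) (y : ℝ) : -((w - (y:ℂ))⁻¹).im = cker w.im w.re y := by
  rw [Complex.inv_im]
  unfold cker
  simp only [Complex.sub_im, Complex.sub_re, Complex.ofReal_im, Complex.ofReal_re,
    Complex.normSq_apply]
  rw [neg_div, neg_neg, sub_zero]
  ring_nf

lemma cker_int_eq (m : Measure ℝ) [IsProbabilityMeasure m] {z : ℂ} (hz : 0 < z.im) :
    ∫ u, cker z.im z.re u ∂m = -(∫ u, (z - (u : ℂ))⁻¹ ∂m).im := by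
  have h := integral_im (μ := m) (f := fun u : ℝ => (z - (u : ℂ))⁻¹) (integrable_resolvent m hz)
  simp only [RCLike.im_to_complex] at h
  rw [← h, ← integral_neg]
  exact integral_congr_ae (Eventually.of_forall fun u => (neg_inv_im z u).symm)

lemma cker_integrable_prob {e : ℝ} (he : 0 < e) (x : ℝ) (m : Measure ℝ)
    [IsProbabilityMeasure m] : Integrable (fun u => cker e x u) m := by
  refine ⟨(((cker_cont he).comp (Continuous.prodMk_right x)).aestronglyMeasurable), ?_⟩
  apply HasFiniteIntegral.of_bounded (C := e⁻¹)
  filter_upwards with u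
  rw [Real.norm_eq_abs, abs_of_nonneg (cker_nonneg he x u)]
  exact cker_le he x u

lemma swap_lemma (m : Measure ℝ) [IsProbabilityMeasure m] (K : ℝ → ℝ → ℝ)
    (hKm : Measurable fun q : ℝ × ℝ => K q.1 q.2)
    (hK0 : ∀ x y, 0 ≤ K x y)
    (hKpi : ∀ y, ∫⁻ x, ENNReal.ofReal (K x y) = ENNReal.ofReal π)
    (f : ℝ → ℝ) (hf : Continuous f) (C : ℝ) (hC : ∀ x, |f x| ≤ C) :
    ∫ x, f x * ∫ y, K x y ∂m = ∫ y, (∫ x, f x * K x y) ∂m := by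
  have hC0 : 0 ≤ C := le_trans (abs_nonneg _) (hC 0)
  have hmeas : Measurable fun q : ℝ × ℝ => f q.1 * K q.1 q.2 :=
    (hf.measurable.comp measurable_fst).mul hKm
  have hKlint : ∫⁻ q : ℝ × ℝ, ENNReal.ofReal (K q.1 q.2) ∂(volume.prod m)
      = ENNReal.ofReal π := by
    rw [lintegral_prod_symm' _ (hKm.ennreal_ofReal)]
    simp only [hKpi]
    simp
  have hint : Integrable (Function.uncurry fun x y => f x * K x y) (volume.prod m) := by
    refine ⟨hmeas.aestronglyMeasurable, ?_⟩
    unfold HasFiniteIntegral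
    calc ∫⁻ q, ‖f q.1 * K q.1 q.2‖₊ ∂(volume.prod m)
        ≤ ∫⁻ q : ℝ × ℝ, ENNReal.ofReal C * ENNReal.ofReal (K q.1 q.2) ∂(volume.prod m) := by
          refine lintegral_mono fun q => ?_
          rw [← ENNReal.ofReal_mul hC0]
          rw [← enorm_eq_nnnorm, Real.enorm_eq_ofReal_abs]
          apply ENNReal.ofReal_le_ofReal
          rw [abs_mul, abs_of_nonneg (hK0 q.1 q.2)]
          exact mul_le_mul_of_nonneg_right (hC q.1) (hK0 q.1 q.2)
      _ = ENNReal.ofReal C * ENNReal.ofReal π := by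
          rw [lintegral_const_mul _ (hKm.ennreal_ofReal), hKlint]
      _ < ⊤ := ENNReal.mul_lt_top ENNReal.ofReal_lt_top ENNReal.ofReal_lt_top
  have hswap := integral_integral_swap hint
  rw [show (fun x => f x * ∫ y, K x y ∂m) = fun x => ∫ y, f x * K x y ∂m from
    funext fun x => (integral_const_mul (f x) fun y => K x y).symm]
  exact hswap

lemma rewriteA (m : Measure ℝ) [IsProbabilityMeasure m] {e : ℝ} (he : 0 < e)
    (f : ℝ → ℝ) (hf : Continuous f) (C : ℝ) (hC : ∀ x, |f x| ≤ C) :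
    ∫ x, f x * ∫ u, cker e x u ∂m
      = ∫ u, (∫ v, f (u + e * v) * (1 + v^2)⁻¹) ∂m := by
  have h := swap_lemma m (fun x u => cker e x u) (cker_cont he).measurable
    (cker_nonneg he)
    (fun u => by
      rw [← ofReal_integral_eq_lintegral_ofReal (cker_integrable he u)
        (Eventually.of_forall (cker_nonneg he · u)), cker_integral he u])
    f hf C hC
  rw [h]
  exact integral_congr_ae (Eventually.of_forall fun u => cker_subst he f u)

lemma inner_bound {f : ℝ → ℝ} {C : ℝ} (hC : ∀ x, |f x| ≤ C) (u e : ℝ) :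
    |∫ v, f (u + e * v) * (1 + v^2)⁻¹| ≤ C * π := by
  have hInt : Integrable fun v : ℝ => C * (1 + v^2)⁻¹ :=
    integrable_inv_one_add_sq.const_mul C
  have h := norm_integral_le_of_norm_le (μ := volume)
    (f := fun v => f (u + e * v) * (1 + v^2)⁻¹) hInt
    (Eventually.of_forall fun v => by
      rw [Real.norm_eq_abs, abs_mul, abs_of_nonneg (by positivity : (0:ℝ) ≤ (1 + v^2)⁻¹)]
      exact mul_le_mul_of_nonneg_right (hC _) (by positivity))
  rw [Real.norm_eq_abs] at h
  rwa [integral_const_mul, integral_univ_inv_one_add_sq] at h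

lemma boundA (m : Measure ℝ) [IsProbabilityMeasure m] {e : ℝ} (he : 0 < e)
    (f : ℝ → ℝ) (hf : Continuous f) (C : ℝ) (hC : ∀ x, |f x| ≤ C) :
    |∫ x, f x * ∫ u, cker e x u ∂m| ≤ C * π := by
  rw [rewriteA m he f hf C hC]
  have h := norm_integral_le_of_norm_le (μ := m) (integrable_const (C * π))
    (Eventually.of_forall fun u => by
      rw [Real.norm_eq_abs]; exact inner_bound hC u e)
  rw [Real.norm_eq_abs] at h
  simpa using h

lemma tendstoA (m : Measure ℝ) [IsProbabilityMeasure m]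
    (f : ℝ → ℝ) (hf : Continuous f) (C : ℝ) (hC : ∀ x, |f x| ≤ C)
    (en : ℕ → ℝ) (hpos : ∀ n, 0 < en n) (hlim : Tendsto en atTop (𝓝 0)) :
    Tendsto (fun n => ∫ x, f x * ∫ u, cker (en n) x u ∂m) atTop
      (𝓝 (π * ∫ u, f u ∂m)) := by
  have hrw : (fun n => ∫ x, f x * ∫ u, cker (en n) x u ∂m)
      = fun n => ∫ u, (∫ v, f (u + en n * v) * (1 + v^2)⁻¹) ∂m :=
    funext fun n => rewriteA m (hpos n) f hf C hC
  rw [hrw, show π * ∫ u, f u ∂m = ∫ u, π * f u ∂m from (integral_const_mul π f).symm]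
  refine tendsto_integral_of_dominated_convergence (fun _ => C * π) ?_ (integrable_const _)
    ?_ ?_
  · intro n
    have hcont : Continuous fun p : ℝ × ℝ => f (p.1 + en n * p.2) * (1 + p.2^2)⁻¹ :=
      (hf.comp (continuous_fst.add (continuous_const.mul continuous_snd))).mul
        ((continuous_const.add (continuous_snd.pow 2)).inv₀ (fun p => (by positivity : (0:ℝ) < 1 + p.2^2).ne'))
    exact hcont.stronglyMeasurable.integral_prod_right'.aestronglyMeasurable
  · intro n
    filter_upwards with u
    rw [Real.norm_eq_abs]
    exact inner_bound hC u (en n)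
  · filter_upwards with u
    have key : Tendsto (fun n => ∫ v, f (u + en n * v) * (1 + v^2)⁻¹) atTop
        (𝓝 (∫ v, f u * (1 + v^2)⁻¹)) := by
      refine tendsto_integral_of_dominated_convergence (fun v => C * (1 + v^2)⁻¹)
        (fun n => Continuous.aestronglyMeasurable
          ((hf.comp (continuous_const.add (continuous_const.mul continuous_id))).mul
            ((continuous_const.add ((continuous_id.pow 2))).inv₀ (fun v => (by positivity : (0:ℝ) < 1 + v^2).ne'))))
        (integrable_inv_one_add_sq.const_mul C) ?_ ?_
      · intro n
        filter_upwards with v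
        rw [Real.norm_eq_abs, abs_mul, abs_of_nonneg (by positivity : (0:ℝ) ≤ (1 + v^2)⁻¹)]
        exact mul_le_mul_of_nonneg_right (hC _) (by positivity)
      · filter_upwards with v
        have h1 : Tendsto (fun n => u + en n * v) atTop (𝓝 u) := by
          have := (hlim.mul_const v).const_add u
          simpa using this
        exact ((hf.tendsto u).comp h1).mul_const _
    rwa [show ∫ v, f u * (1 + v^2)⁻¹ = π * f u by
      rw [integral_const_mul, integral_univ_inv_one_add_sq]; ring] at key

/-- The Markov transition operators `T_t f(x) = ∫ f dμ_{t,x}`, where `μ_{t,x}` has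
reciprocal Cauchy transform `H_t(z) − x` and `(H_t)` is the composition semigroup of
reciprocal Cauchy transforms of a monotone convolution semigroup, form a semigroup:
`T_s (T_t f) = T_{s+t} f` for all `f ∈ C_b(ℝ)`. -/
theorem transition_operators_semigroup
    (Hfun : ℝ → ℂ → ℂ)
    (hH0 : ∀ z : ℂ, 0 < z.im → Hfun 0 z = z)
    (hHmem : ∀ t : ℝ, 0 ≤ t → ∀ z : ℂ, 0 < z.im → 0 < (Hfun t z).im)
    (hHsem : ∀ s : ℝ, 0 ≤ s → ∀ t : ℝ, 0 ≤ t → ∀ z : ℂ, 0 < z.im →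
      Hfun (s + t) z = Hfun s (Hfun t z))
    (μ : ℝ → ℝ → Measure ℝ)
    (hProb : ∀ t : ℝ, 0 ≤ t → ∀ x : ℝ, IsProbabilityMeasure (μ t x))
    (hMeas : ∀ t : ℝ, 0 ≤ t → Measurable (μ t))
    (hChar : ∀ t : ℝ, 0 ≤ t → ∀ (x : ℝ) (z : ℂ), 0 < z.im →
      (∫ y : ℝ, (z - (y : ℂ))⁻¹ ∂(μ t x))⁻¹ = Hfun t z - (x : ℂ)) :
    ∀ s : ℝ, 0 ≤ s → ∀ t : ℝ, 0 ≤ t →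
      ∀ f : ℝ → ℝ, Continuous f → (∃ C, ∀ x, |f x| ≤ C) →
        ∀ x : ℝ, ∫ y, (∫ u, f u ∂(μ t y)) ∂(μ s x) = ∫ y, f y ∂(μ (s + t) x) := by
  intro s hs t ht f hf hfb x
  obtain ⟨C, hC⟩ := hfb
  haveI hps := hProb s hs x
  haveI hpst := hProb (s + t) (by linarith) x
  set en : ℕ → ℝ := fun n => ((n : ℝ) + 1)⁻¹ with hen
  have hpos : ∀ n, 0 < en n := fun n => by positivity
  have hlim : Tendsto en atTop (𝓝 0) := by
    simpa [hen, one_div] using tendsto_one_div_add_atTop_nhds_zero_nat (𝕜 := ℝ)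
  -- inverted characterization
  have hA : ∀ (r : ℝ), 0 ≤ r → ∀ (a : ℝ) (z : ℂ), 0 < z.im →
      ∫ u, (z - (u : ℂ))⁻¹ ∂(μ r a) = (Hfun r z - a)⁻¹ := by
    intro r hr a z hz
    have h := congrArg Inv.inv (hChar r hr a z hz)
    rwa [inv_inv] at h
  -- key identity between iterated and direct kernels
  have claim1 : ∀ (e : ℝ), 0 < e → ∀ x' : ℝ,
      (∫ y, (∫ u, cker e x' u ∂(μ t y)) ∂(μ s x)) = ∫ u, cker e x' u ∂(μ (s + t) x) := by
    intro e he x'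
    set z : ℂ := (x' : ℂ) + e * Complex.I with hzdef
    have hzim : z.im = e := by simp [hzdef]
    have hzre : z.re = x' := by simp [hzdef]
    have hz : 0 < z.im := by rw [hzim]; exact he
    set w : ℂ := Hfun t z with hwdef
    have hw : 0 < w.im := hHmem t ht z hz
    have hcker_eq : ∀ y : ℝ, (∫ u, cker e x' u ∂(μ t y)) = cker w.im w.re y := by
      intro y
      haveI := hProb t ht y
      calc ∫ u, cker e x' u ∂(μ t y)
          = ∫ u, cker z.im z.re u ∂(μ t y) := by rw [hzim, hzre]
        _ = -(∫ u, (z - (u : ℂ))⁻¹ ∂(μ t y)).im := cker_int_eq (μ t y) hz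
        _ = -((w - (y : ℂ))⁻¹).im := by rw [hA t ht y z hz]
        _ = cker w.im w.re y := neg_inv_im w y
    calc ∫ y, (∫ u, cker e x' u ∂(μ t y)) ∂(μ s x)
        = ∫ y, cker w.im w.re y ∂(μ s x) :=
          integral_congr_ae (Eventually.of_forall hcker_eq)
      _ = -(∫ y, (w - (y : ℂ))⁻¹ ∂(μ s x)).im := cker_int_eq (μ s x) hw
      _ = -((Hfun s w - x)⁻¹).im := by rw [hA s hs x w hw]
      _ = -((Hfun (s + t) z - x)⁻¹).im := by rw [hHsem s hs t ht z hz]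
      _ = -(∫ u, (z - (u : ℂ))⁻¹ ∂(μ (s + t) x)).im := by
          rw [hA (s + t) (by linarith) x z hz]
      _ = ∫ u, cker z.im z.re u ∂(μ (s + t) x) := (cker_int_eq (μ (s + t) x) hz).symm
      _ = ∫ u, cker e x' u ∂(μ (s + t) x) := by rw [hzim, hzre]
  -- measurability of the iterated kernel
  let κ : Kernel ℝ ℝ := ⟨μ t, hMeas t ht⟩
  haveI : IsMarkovKernel κ := ⟨fun y => hProb t ht y⟩
  have hKm : ∀ e : ℝ, 0 < e →
      Measurable fun q : ℝ × ℝ => ∫ u, cker e q.1 u ∂(μ t q.2) := by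
    intro e he
    have hsm := MeasureTheory.StronglyMeasurable.integral_kernel_prod_right'
      (κ := κ.comap Prod.snd measurable_snd)
      (f := fun p : (ℝ × ℝ) × ℝ => cker e p.1.1 p.2)
      (Continuous.stronglyMeasurable
        ((cker_cont he).comp (continuous_fst.fst.prodMk continuous_snd)))
    simp only [Kernel.comap_apply] at hsm
    exact hsm.measurable
  -- lintegral identity for the iterated kernel
  have hKpi : ∀ e : ℝ, 0 < e → ∀ y : ℝ,
      ∫⁻ x', ENNReal.ofReal (∫ u, cker e x' u ∂(μ t y)) = ENNReal.ofReal π := by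
    intro e he y
    haveI := hProb t ht y
    have hp : ∀ x' : ℝ, ENNReal.ofReal (∫ u, cker e x' u ∂(μ t y))
        = ∫⁻ u, ENNReal.ofReal (cker e x' u) ∂(μ t y) := fun x' =>
      ofReal_integral_eq_lintegral_ofReal (cker_integrable_prob he x' (μ t y))
        (Eventually.of_forall fun u => cker_nonneg he _ _)
    simp_rw [hp]
    rw [lintegral_lintegral_swap (((cker_cont he).measurable.ennreal_ofReal).aemeasurable)]
    have hq : ∀ u : ℝ, ∫⁻ x', ENNReal.ofReal (cker e x' u) = ENNReal.ofReal π := by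
      intro u
      rw [← ofReal_integral_eq_lintegral_ofReal (cker_integrable he u)
        (Eventually.of_forall fun x' => cker_nonneg he x' u), cker_integral he u]
    simp_rw [hq]
    simp
  -- the approximating sequence
  set seq : ℕ → ℝ :=
    fun n => ∫ x', f x' * ∫ u, cker (en n) x' u ∂(μ (s + t) x) with hseq
  have h1 : Tendsto seq atTop (𝓝 (π * ∫ u, f u ∂(μ (s + t) x))) :=
    tendstoA (μ (s + t) x) f hf C hC en hpos hlim
  have h2 : ∀ n, seq n
      = ∫ y, (∫ x', f x' * ∫ u, cker (en n) x' u ∂(μ t y)) ∂(μ s x) := by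
    intro n
    have hswap := swap_lemma (μ s x) (fun x' y => ∫ u, cker (en n) x' u ∂(μ t y))
      (hKm _ (hpos n))
      (fun x' y => integral_nonneg (fun u => cker_nonneg (hpos n) x' u))
      (hKpi _ (hpos n)) f hf C hC
    have hc : (fun x' => f x' * ∫ u, cker (en n) x' u ∂(μ (s + t) x))
        = fun x' => f x' * ∫ y, (∫ u, cker (en n) x' u ∂(μ t y)) ∂(μ s x) :=
      funext fun x' => by rw [claim1 (en n) (hpos n) x']
    rw [hseq]
    simp only
    rw [show (∫ x', f x' * ∫ u, cker (en n) x' u ∂(μ (s + t) x))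
        = ∫ x', f x' * ∫ y, (∫ u, cker (en n) x' u ∂(μ t y)) ∂(μ s x) from by rw [hc]]
    exact hswap
  have h3 : Tendsto (fun n => ∫ y, (∫ x', f x' * ∫ u, cker (en n) x' u ∂(μ t y)) ∂(μ s x))
      atTop (𝓝 (π * ∫ y, (∫ u, f u ∂(μ t y)) ∂(μ s x))) := by
    rw [show π * ∫ y, (∫ u, f u ∂(μ t y)) ∂(μ s x)
        = ∫ y, π * (∫ u, f u ∂(μ t y)) ∂(μ s x) from
      (integral_const_mul π fun y => ∫ u, f u ∂(μ t y)).symm]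
    refine tendsto_integral_of_dominated_convergence (fun _ => C * π) ?_ (integrable_const _)
      ?_ ?_
    · intro n
      have hjm : Measurable fun p : ℝ × ℝ => f p.2 * ∫ u, cker (en n) p.2 u ∂(μ t p.1) :=
        (hf.measurable.comp measurable_snd).mul ((hKm _ (hpos n)).comp measurable_swap)
      exact (hjm.stronglyMeasurable.integral_prod_right').aestronglyMeasurable
    · intro n
      filter_upwards with y
      haveI := hProb t ht y
      rw [Real.norm_eq_abs]
      exact boundA (μ t y) (hpos n) f hf C hC
    · filter_upwards with y
      haveI := hProb t ht y
      exact tendstoA (μ t y) f hf C hC en hpos hlim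
  have h2' : Tendsto seq atTop (𝓝 (π * ∫ y, (∫ u, f u ∂(μ t y)) ∂(μ s x))) := by
    rwa [show (fun n => ∫ y, (∫ x', f x' * ∫ u, cker (en n) x' u ∂(μ t y)) ∂(μ s x)) = seq
      from funext fun n => (h2 n).symm] at h3
  exact mul_left_cancel₀ Real.pi_ne_zero (tendsto_nhds_unique h2' h1)
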